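/- arXiv:2202.03719 — 2 statements merged into one kernel-verified Lean document; each statement's English description precedes it below -/
import Mathlib

section
/- Let q ≥ 1, δ > 0, and F(A) = (‖A‖² + δ²)^{(q-2)/2} A on n×n real matrices. Then for all C, D: (F(C) − F(D)) : (C − D) = ∫₀¹ [ (‖D + s(C−D)‖² + δ²)^{(q-2)/2} ‖C−D‖² + (q−2)(‖D + s(C−D)‖² + δ²)^{(q-4)/2} ((D + s(C−D)) : (C−D))² ] ds, and this integrand is bounded below by (‖D+s(C−D)‖²+δ²)^{(q-4)/2} ( min(1, q−1) ‖D+s(C−D)‖² + δ² ) ‖C−D‖² ≥ 0. -/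
open Finset intervalIntegral

private lemma aux_int (q δ : ℝ) (hδ : 0 < δ) (N P : ℝ → ℝ) (e : ℝ)
    (hNnn : ∀ s, 0 ≤ N s) (hN : ∀ s, HasDerivAt N (2 * P s) s)
    (hP : ∀ s, HasDerivAt P e s) (hNc : Continuous N) (hPc : Continuous P) :
    (∫ s in (0:ℝ)..1,
        ((N s + δ^2) ^ ((q-2)/2) * e + (q-2) * (N s + δ^2) ^ ((q-4)/2) * (P s)^2))
      = (N 1 + δ^2) ^ ((q-2)/2) * P 1 - (N 0 + δ^2) ^ ((q-2)/2) * P 0 := by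
  have ht : ∀ s, (0:ℝ) < N s + δ^2 := fun s =>
    add_pos_of_nonneg_of_pos (hNnn s) (by positivity)
  have hne : ∀ s, N s + δ^2 ≠ 0 := fun s => (ht s).ne'
  have hder : ∀ s : ℝ, HasDerivAt (fun t => (N t + δ^2) ^ ((q-2)/2) * P t)
      ((N s + δ^2) ^ ((q-2)/2) * e + (q-2) * (N s + δ^2) ^ ((q-4)/2) * (P s)^2) s := by
    intro s
    have h0 : HasDerivAt (fun t => N t + δ^2) (2 * P s) s := (hN s).add_const _
    have hr := h0.rpow_const (p := (q-2)/2) (Or.inl (hne s))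
    have := hr.fun_mul (hP s)
    refine this.congr_deriv ?_
    rw [show (q-2)/2 - 1 = (q-4)/2 by ring]
    ring
  have hcont : Continuous (fun s =>
      (N s + δ^2) ^ ((q-2)/2) * e + (q-2) * (N s + δ^2) ^ ((q-4)/2) * (P s)^2) := by
    have h1 : Continuous (fun s => N s + δ^2) := hNc.add continuous_const
    exact ((h1.rpow_const fun s => Or.inl (hne s)).mul continuous_const).add
      ((continuous_const.mul (h1.rpow_const fun s => Or.inl (hne s))).mul (hPc.pow 2))
  exact intervalIntegral.integral_eq_sub_of_hasDerivAt (fun x _ => hder x)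
    (hcont.intervalIntegrable _ _)

private lemma aux_bd (q δ : ℝ) (hq : 1 ≤ q) (hδ : 0 < δ) (Ns Ps e : ℝ)
    (hN : 0 ≤ Ns) (he : 0 ≤ e) (hcs : Ps^2 ≤ Ns * e) :
    ((Ns + δ^2) ^ ((q-2)/2) * e + (q-2) * (Ns + δ^2) ^ ((q-4)/2) * Ps^2
      ≥ (Ns + δ^2) ^ ((q-4)/2) * (min 1 (q-1) * Ns + δ^2) * e)
    ∧ (Ns + δ^2) ^ ((q-4)/2) * (min 1 (q-1) * Ns + δ^2) * e ≥ 0 := by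
  have ht : (0:ℝ) < Ns + δ^2 := by positivity
  have hA : (0:ℝ) < (Ns + δ^2) ^ ((q-4)/2) := Real.rpow_pos_of_pos ht _
  have hm0 : 0 ≤ min 1 (q-1) := le_min (by norm_num) (by linarith)
  have hsplit : (Ns + δ^2) ^ ((q-2)/2) = (Ns + δ^2) ^ ((q-4)/2) * (Ns + δ^2) := by
    have : (q-2)/2 = (q-4)/2 + 1 := by ring
    rw [this, Real.rpow_add ht, Real.rpow_one]
  constructor
  · rw [hsplit]
    rcases le_total q 2 with h2 | h2
    · have hm : min 1 (q-1) = q - 1 := min_eq_right (by linarith)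
      rw [hm]
      have key : (q-2) * Ps^2 ≥ (q-2) * (Ns * e) :=
        mul_le_mul_of_nonpos_left hcs (by linarith)
      nlinarith [hA.le, mul_le_mul_of_nonneg_left key hA.le]
    · have hm : min 1 (q-1) = 1 := min_eq_left (by linarith)
      rw [hm]
      nlinarith [hA.le, sq_nonneg Ps, mul_nonneg (mul_nonneg (by linarith : (0:ℝ) ≤ q-2) hA.le) (sq_nonneg Ps)]
  · positivity

/-- Integral representation and lower bound for the monotonicity of
`F(A) = (‖A‖²+δ²)^{(q-2)/2} A` (Frobenius norm `‖·‖` and inner product `:`). -/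
theorem stmt_2 (n : ℕ) (q δ : ℝ) (hq : 1 ≤ q) (hδ : 0 < δ)
    (C D : Matrix (Fin n) (Fin n) ℝ) :
    (∑ i, ∑ j,
        (((∑ k, ∑ l, (C k l) ^ 2) + δ ^ 2) ^ ((q - 2) / 2) * C i j
          - ((∑ k, ∑ l, (D k l) ^ 2) + δ ^ 2) ^ ((q - 2) / 2) * D i j)
        * (C i j - D i j))
      = ∫ s in (0:ℝ)..1,
          (((∑ k, ∑ l, (D k l + s * (C k l - D k l)) ^ 2) + δ ^ 2) ^ ((q - 2) / 2)
              * (∑ i, ∑ j, (C i j - D i j) ^ 2)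
            + (q - 2) *
              ((∑ k, ∑ l, (D k l + s * (C k l - D k l)) ^ 2) + δ ^ 2) ^ ((q - 4) / 2)
              * (∑ i, ∑ j, (D i j + s * (C i j - D i j)) * (C i j - D i j)) ^ 2)
    ∧ ∀ s ∈ Set.Icc (0:ℝ) 1,
        (((∑ k, ∑ l, (D k l + s * (C k l - D k l)) ^ 2) + δ ^ 2) ^ ((q - 2) / 2)
              * (∑ i, ∑ j, (C i j - D i j) ^ 2)
            + (q - 2) *
              ((∑ k, ∑ l, (D k l + s * (C k l - D k l)) ^ 2) + δ ^ 2) ^ ((q - 4) / 2)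
              * (∑ i, ∑ j, (D i j + s * (C i j - D i j)) * (C i j - D i j)) ^ 2)
          ≥ ((∑ k, ∑ l, (D k l + s * (C k l - D k l)) ^ 2) + δ ^ 2) ^ ((q - 4) / 2)
              * (min 1 (q - 1) * (∑ k, ∑ l, (D k l + s * (C k l - D k l)) ^ 2) + δ ^ 2)
              * (∑ i, ∑ j, (C i j - D i j) ^ 2)
        ∧ ((∑ k, ∑ l, (D k l + s * (C k l - D k l)) ^ 2) + δ ^ 2) ^ ((q - 4) / 2)
              * (min 1 (q - 1) * (∑ k, ∑ l, (D k l + s * (C k l - D k l)) ^ 2) + δ ^ 2)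
              * (∑ i, ∑ j, (C i j - D i j) ^ 2) ≥ 0 := by
  have hNnn : ∀ s : ℝ, (0:ℝ) ≤ ∑ k, ∑ l, (D k l + s * (C k l - D k l)) ^ 2 := by
    intro s; positivity
  have he : (0:ℝ) ≤ ∑ i, ∑ j, (C i j - D i j) ^ 2 := by positivity
  have hN : ∀ s : ℝ, HasDerivAt (fun t => ∑ k, ∑ l, (D k l + t * (C k l - D k l)) ^ 2)
      (2 * ∑ i, ∑ j, (D i j + s * (C i j - D i j)) * (C i j - D i j)) s := by
    intro s
    have : HasDerivAt (fun t => ∑ k, ∑ l, (D k l + t * (C k l - D k l)) ^ 2)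
        (∑ k, ∑ l, 2 * ((D k l + s * (C k l - D k l)) * (C k l - D k l))) s := by
      apply HasDerivAt.fun_sum; intro k _
      apply HasDerivAt.fun_sum; intro l _
      have h1 : HasDerivAt (fun t : ℝ => D k l + t * (C k l - D k l)) (C k l - D k l) s := by
        simpa using ((hasDerivAt_id s).mul_const (C k l - D k l)).const_add (D k l)
      have := h1.pow 2
      refine this.congr_deriv ?_; ring
    convert this using 1
    rw [Finset.mul_sum]; congr 1; ext k; rw [Finset.mul_sum]
  have hP : ∀ s : ℝ, HasDerivAt
      (fun t => ∑ i, ∑ j, (D i j + t * (C i j - D i j)) * (C i j - D i j))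
      (∑ i, ∑ j, (C i j - D i j) ^ 2) s := by
    intro s
    apply HasDerivAt.fun_sum; intro i _
    apply HasDerivAt.fun_sum; intro j _
    have h1 : HasDerivAt (fun t : ℝ => D i j + t * (C i j - D i j)) (C i j - D i j) s := by
      simpa using ((hasDerivAt_id s).mul_const (C i j - D i j)).const_add (D i j)
    have := h1.mul_const (C i j - D i j)
    refine this.congr_deriv ?_; ring
  have hNc : Continuous (fun t : ℝ => ∑ k, ∑ l, (D k l + t * (C k l - D k l)) ^ 2) := by
    fun_prop
  have hPc : Continuous
      (fun t : ℝ => ∑ i, ∑ j, (D i j + t * (C i j - D i j)) * (C i j - D i j)) := by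
    fun_prop
  constructor
  · have key := aux_int q δ hδ _ _ _ hNnn hN hP hNc hPc
    rw [key]
    simp only [one_mul, zero_mul, add_zero, zero_add, add_sub_cancel]
    simp [sub_mul, Finset.sum_sub_distrib, Finset.mul_sum, mul_assoc]
  · intro s _
    have hcs : (∑ i, ∑ j, (D i j + s * (C i j - D i j)) * (C i j - D i j)) ^ 2
        ≤ (∑ k, ∑ l, (D k l + s * (C k l - D k l)) ^ 2) * ∑ i, ∑ j, (C i j - D i j) ^ 2 := by
      have := Finset.sum_mul_sq_le_sq_mul_sq Finset.univ
        (fun p : Fin n × Fin n => D p.1 p.2 + s * (C p.1 p.2 - D p.1 p.2))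
        (fun p : Fin n × Fin n => C p.1 p.2 - D p.1 p.2)
      simpa [Fintype.sum_prod_type] using this
    exact aux_bd q δ hq hδ _ _ _ (hNnn s) he hcs
end

section
/- Let μ > 0 and τ* ≥ 0. Suppose S, S̄ ∈ ℝ and a, b ∈ ℝ satisfy the one-dimensional Bingham constitutive relation: S = μ a + τ* a/|a| if a ≠ 0 and |S| ≤ τ* if a = 0, and likewise S̄ = μ b + τ* b/|b| if b ≠ 0 and |S̄| ≤ τ* if b = 0. Then (S − S̄)(a − b) ≥ μ (a − b)². -/
/-- Monotonicity of the (multivalued) one-dimensional Bingham constitutive law. -/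
theorem stmt_4 (μ τ : ℝ) (hμ : 0 < μ) (hτ : 0 ≤ τ)
    (S Sb a b : ℝ)
    (hS1 : a ≠ 0 → S = μ * a + τ * a / |a|)
    (hS2 : a = 0 → |S| ≤ τ)
    (hSb1 : b ≠ 0 → Sb = μ * b + τ * b / |b|)
    (hSb2 : b = 0 → |Sb| ≤ τ) :
    (S - Sb) * (a - b) ≥ μ * (a - b) ^ 2 := by
  by_cases ha : a = 0 <;> by_cases hb : b = 0
  · subst ha hb
    simp [sq]
  · -- a = 0, b ≠ 0
    subst ha
    have hSb := hSb1 hb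
    have h2 := hS2 rfl
    have habs := abs_le.mp h2
    rcases lt_or_gt_of_ne hb with hbneg | hbpos
    · have : |b| = -b := abs_of_neg hbneg
      rw [hSb, this]
      have hb' : τ * b / (-b) = -τ := by rw [div_neg, mul_div_assoc, div_self hb, mul_one]
      rw [hb']
      nlinarith [habs.1, habs.2]
    · have : |b| = b := abs_of_pos hbpos
      rw [hSb, this]
      have hb' : τ * b / b = τ := by field_simp
      rw [hb']
      nlinarith [habs.1, habs.2]
  · -- a ≠ 0, b = 0
    subst hb
    have hS := hS1 ha
    have h2 := hSb2 rfl
    have habs := abs_le.mp h2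
    rcases lt_or_gt_of_ne ha with haneg | hapos
    · have : |a| = -a := abs_of_neg haneg
      rw [hS, this]
      have ha' : τ * a / (-a) = -τ := by rw [div_neg, mul_div_assoc, div_self ha, mul_one]
      rw [ha']
      nlinarith [habs.1, habs.2]
    · have : |a| = a := abs_of_pos hapos
      rw [hS, this]
      have ha' : τ * a / a = τ := by field_simp
      rw [ha']
      nlinarith [habs.1, habs.2]
  · have hS := hS1 ha
    have hSb := hSb1 hb
    rw [hS, hSb]
    rcases lt_or_gt_of_ne ha with haneg | hapos <;>
      rcases lt_or_gt_of_ne hb with hbneg | hbpos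
    · rw [abs_of_neg haneg, abs_of_neg hbneg]
      have h1 : τ * a / (-a) = -τ := by rw [div_neg, mul_div_assoc, div_self ha, mul_one]
      have h2 : τ * b / (-b) = -τ := by rw [div_neg, mul_div_assoc, div_self hb, mul_one]
      rw [h1, h2]; nlinarith
    · rw [abs_of_neg haneg, abs_of_pos hbpos]
      have h1 : τ * a / (-a) = -τ := by rw [div_neg, mul_div_assoc, div_self ha, mul_one]
      have h2 : τ * b / b = τ := by field_simp
      rw [h1, h2]; nlinarith
    · rw [abs_of_pos hapos, abs_of_neg hbneg]
      have h1 : τ * a / a = τ := by field_simp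
      have h2 : τ * b / (-b) = -τ := by rw [div_neg, mul_div_assoc, div_self hb, mul_one]
      rw [h1, h2]; nlinarith
    · rw [abs_of_pos hapos, abs_of_pos hbpos]
      have h1 : τ * a / a = τ := by field_simp
      have h2 : τ * b / b = τ := by field_simp
      rw [h1, h2]; nlinarith
end
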